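/- arXiv:1403.7938 — 2 statements merged into one kernel-verified Lean document; each statement's English description precedes it below -/
import Mathlib

section
/- Let m, n, t ∈ ℕ, let B be an algebra, and let C be a clonoid with source set A = {1,2,…,t} and target algebra B. Let a ∈ A^m and b ∈ A^n with a ≤_a b. Then Φ(C, b) ⊆ Φ(C, a). -/
open FirstOrder FirstOrder.Language

/-- `C` is a clonoid with source set `S` and target algebra `B`: writing
`C n` for its `n`-ary part (a set of functions `Sⁿ → B`), each `C n` is a
subuniverse of `B^(Sⁿ)` (closed under the componentwise operations of `B`),
and `C` is closed under manipulation (permuting and identifying) of arguments. -/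
def IsClonoid (L : FirstOrder.Language) (S B : Type) [L.Structure B]
    (C : ∀ n : ℕ, Set ((Fin n → S) → B)) : Prop :=
  (∀ (n l : ℕ) (f : L.Functions l) (g : Fin l → ((Fin n → S) → B)),
      (∀ i, g i ∈ C n) →
      (fun v : Fin n → S => Structure.funMap f (fun i => g i v)) ∈ C n) ∧
  (∀ (k n : ℕ) (σ : Fin k → Fin n), ∀ c ∈ C k,
      (fun v : Fin n → S => c (fun i => v (σ i))) ∈ C n)

/-- The strict lexicographic order on tuples `Fin n → Fin t`
(for `A = {1, …, t}` with its natural order). -/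
def LtLex {n t : ℕ} (c a : Fin n → Fin t) : Prop :=
  ∃ i : Fin n, (∀ j : Fin n, j < i → c j = a j) ∧ c i < a i

/-- `Φ(C, a)`: the set of forks of `C` at the tuple `a ∈ Aⁿ`, i.e. all pairs
`(f a, g a)` where `f, g` are `n`-ary members of `C` that agree on all tuples
lexicographically smaller than `a`. -/
def PhiX {B : Type} {t : ℕ}
    (C : ∀ n : ℕ, Set ((Fin n → Fin t) → B)) {n : ℕ} (a : Fin n → Fin t) :
    Set (B × B) :=
  {p | ∃ f ∈ C n, ∃ g ∈ C n,
        (∀ c : Fin n → Fin t, LtLex c a → f c = g c) ∧ p = (f a, g a)}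

/-- `h` witnesses `a ≤ₐ b` for tuples `a ∈ Aᵐ`, `b ∈ Aⁿ` over `A = {1, …, t}`:
`h` is injective and increasing, `aᵢ = b_{h i}`, `a` and `b` have the same set of
letters, and `h` maps the first occurrence of each letter of `a` to the first
occurrence of that letter in `b`. -/
def WitnessesF {t m n : ℕ} (a : Fin m → Fin t) (b : Fin n → Fin t)
    (h : Fin m → Fin n) : Prop :=
  StrictMono h ∧
  (∀ i : Fin m, a i = b (h i)) ∧
  Set.range a = Set.range b ∧
  (∀ i : Fin m, (∀ i' : Fin m, i' < i → a i' ≠ a i) →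
    ∀ j : Fin n, j < h i → b j ≠ a i)

/-- **Lemma (forks decrease along `≤ₐ`).** Let `C` be a clonoid with source set
`A = {1, …, t}` and target algebra `B`, and let `a ∈ Aᵐ`, `b ∈ Aⁿ` with `a ≤ₐ b`.
Then `Φ(C, b) ⊆ Φ(C, a)`. -/
theorem phiX_antitone
    (L : FirstOrder.Language) (B : Type) [L.Structure B] (t m n : ℕ)
    (C : ∀ n : ℕ, Set ((Fin n → Fin t) → B)) (hC : IsClonoid L (Fin t) B C)
    (a : Fin m → Fin t) (b : Fin n → Fin t)
    (h : Fin m → Fin n) (hw : WitnessesF a b h) :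
    PhiX C b ⊆ PhiX C a := by
  classical
  obtain ⟨hmono, hab, hrange, hfo⟩ := hw
  rintro p ⟨f, hf, g, hg, hfg, rfl⟩
  have hex : ∀ j : Fin n, ∃ i : Fin m, a i = b j := fun j => by
    have hbj : b j ∈ Set.range a := hrange ▸ Set.mem_range_self j
    exact hbj
  set S : Fin n → Finset (Fin m) :=
    fun j => Finset.univ.filter (fun i => a i = b j) with hSdef
  have hS : ∀ j, (S j).Nonempty := fun j => by
    obtain ⟨i, hi⟩ := hex j
    exact ⟨i, by simp [hSdef, hi]⟩
  set F : Fin n → Fin m := fun j => (S j).min' (hS j) with hFdef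
  have hF : ∀ j, a (F j) = b j := fun j => by
    have := (S j).min'_mem (hS j)
    simpa [hSdef] using this
  have hFmin : ∀ j i, a i = b j → F j ≤ i := fun j i hi =>
    (S j).min'_le i (by simp [hSdef, hi])
  set σ : Fin n → Fin m :=
    fun j => if hj : ∃ i, h i = j then hj.choose else F j with hσdef
  have hσh : ∀ i, σ (h i) = i := fun i => by
    have hj : ∃ i', h i' = h i := ⟨i, rfl⟩
    have hspec := hj.choose_spec
    simp only [hσdef, dif_pos hj]
    exact hmono.injective hspec
  have haσ : ∀ j, a (σ j) = b j := fun j => by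
    by_cases hj : ∃ i, h i = j
    · simp only [hσdef, dif_pos hj]
      rw [hab, hj.choose_spec]
    · simp only [hσdef, dif_neg hj]
      exact hF j
  have key : ∀ c : Fin m → Fin t, LtLex c a → LtLex (fun j => c (σ j)) b := by
    rintro c ⟨i0, hlt0, hi0⟩
    refine ⟨h i0, ?_, ?_⟩
    · intro j hj
      by_cases hjr : ∃ i, h i = j
      · obtain ⟨i', rfl⟩ := hjr
        have hi' : i' < i0 := hmono.lt_iff_lt.mp hj
        show c (σ (h i')) = b (h i')
        rw [hσh i', hlt0 i' hi', hab]
      · have hσj : σ j = F j := dif_neg hjr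
        have hFj : F j < i0 := by
          by_contra hcon
          push_neg at hcon
          have hfirst : ∀ i' : Fin m, i' < F j → a i' ≠ a (F j) := by
            intro i' hi' hEq
            have hle : F j ≤ i' := hFmin j i' (hEq.trans (hF j))
            exact absurd hi' (not_lt.mpr hle)
          have hne := hfo (F j) hfirst j (lt_of_lt_of_le hj (hmono.monotone hcon))
          exact hne ((hF j).symm)
        show c (σ j) = b j
        rw [hσj, hlt0 (F j) hFj, hF j]
    · show c (σ (h i0)) < b (h i0)
      rw [hσh i0]
      calc c i0 < a i0 := hi0
        _ = b (h i0) := hab i0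
  refine ⟨fun v => f (fun j => v (σ j)), hC.2 n m σ f hf,
          fun v => g (fun j => v (σ j)), hC.2 n m σ g hg, ?_, ?_⟩
  · intro c hc
    exact hfg _ (key c hc)
  · have hb : (fun j => a (σ j)) = b := funext haσ
    simp only [hb]
end

section
/- Let t ∈ ℕ, let C be a clonoid with source set A = {1,2,…,t} and target algebra B, and let α ⊆ B × B. Then Ψ(C, α) := { a ∈ A^+ : Φ(C, a) ⊆ α } is an upward closed subset of the partially ordered set (A^+, ≤_a). -/
open FirstOrder FirstOrder.Language

/-- `A⁺`: the finite tuples over `A = {1, …, t}`. -/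
def TupF (t : ℕ) : Type := Σ n : ℕ, Fin n → Fin t

/-- The order `≤ₐ` on tuples over `A = {1, …, t}`. -/
def LeAF {t : ℕ} (a b : TupF t) : Prop :=
  ∃ h : Fin a.1 → Fin b.1, WitnessesF a.2 b.2 h

/-- `Ψ(C, α)`: the set of tuples `a ∈ A⁺` at which all forks of `C` lie in `α`. -/
def PsiX {B : Type} {t : ℕ}
    (C : ∀ n : ℕ, Set ((Fin n → Fin t) → B)) (α : Set (B × B)) : Set (TupF t) :=
  {a | PhiX C a.2 ⊆ α}

/-- **Lemma (upward closedness of `Ψ`).** Let `C` be a clonoid with source set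
`A = {1, …, t}` and target algebra `B`, and let `α ⊆ B × B`. Then
`Ψ(C, α) = { a ∈ A⁺ : Φ(C, a) ⊆ α }` is an upward closed subset of `(A⁺, ≤ₐ)`. -/
theorem psiX_upward_closed
    (L : FirstOrder.Language) (B : Type) [L.Structure B] (t : ℕ)
    (C : ∀ n : ℕ, Set ((Fin n → Fin t) → B)) (hC : IsClonoid L (Fin t) B C)
    (α : Set (B × B)) :
    ∀ a ∈ PsiX C α, ∀ b : TupF t, LeAF a b → b ∈ PsiX C α := by
  rintro ⟨m, av⟩ ha ⟨n, bv⟩ ⟨h, hmono, hab, hrange, hfo⟩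
  rintro p ⟨f, hf, g, hg, hagree, rfl⟩
  dsimp only at h hmono hab hrange hfo f hf g hg hagree ⊢
  classical
  have hex : ∀ j : Fin n, ∃ q : Fin m, av q = bv j := by
    intro j
    have : bv j ∈ Set.range av := by rw [hrange]; exact ⟨j, rfl⟩
    exact this
  set S : Fin n → Finset (Fin m) :=
    fun j => Finset.univ.filter (fun q => av q = bv j) with hS
  have hSne : ∀ j, (S j).Nonempty := by
    intro j
    obtain ⟨q, hq⟩ := hex j
    exact ⟨q, by simp [hS, hq]⟩
  set fo : Fin n → Fin m := fun j => (S j).min' (hSne j) with hfodef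
  have hfo_eq : ∀ j, av (fo j) = bv j := by
    intro j
    have := (S j).min'_mem (hSne j)
    simpa [hS] using this
  have hfo_min : ∀ j q, av q = bv j → fo j ≤ q := by
    intro j q hq
    exact Finset.min'_le _ _ (by simp [hS, hq])
  set σ : Fin n → Fin m :=
    fun j => if hj : ∃ i, h i = j then hj.choose else fo j with hσdef
  have hσh : ∀ i, σ (h i) = i := by
    intro i
    have hj : ∃ i', h i' = h i := ⟨i, rfl⟩
    simp only [hσdef, dif_pos hj]
    exact hmono.injective hj.choose_spec
  have hσ : ∀ j, av (σ j) = bv j := by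
    intro j
    by_cases hj : ∃ i, h i = j
    · simp only [hσdef, dif_pos hj]
      rw [hab hj.choose, hj.choose_spec]
    · simp only [hσdef, dif_neg hj]
      exact hfo_eq j
  have claim : ∀ c : Fin m → Fin t, LtLex c av →
      LtLex (fun j => c (σ j)) bv := by
    rintro c ⟨i, hlt, hci⟩
    refine ⟨h i, ?_, ?_⟩
    · intro j hj
      have hσlt : σ j < i := by
        by_cases hcase : ∃ i', h i' = j
        · simp only [hσdef, dif_pos hcase]
          have : h hcase.choose < h i := by rw [hcase.choose_spec]; exact hj
          exact hmono.lt_iff_lt.mp this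
        · simp only [hσdef, dif_neg hcase]
          by_contra hle
          push_neg at hle
          have hfirst : ∀ i' : Fin m, i' < fo j → av i' ≠ av (fo j) := by
            intro i' hi' heq
            have : fo j ≤ i' := hfo_min j i' (heq.trans (hfo_eq j))
            exact absurd hi' (not_lt.mpr this)
          have hjlt : j < h (fo j) := lt_of_lt_of_le hj (hmono.monotone hle)
          exact absurd (hfo_eq j).symm (hfo (fo j) hfirst j hjlt)
      show c (σ j) = bv j
      rw [hlt _ hσlt, hσ j]
    · show c (σ (h i)) < bv (h i)
      rw [hσh i, ← hab i]
      exact hci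
  set f' : (Fin m → Fin t) → B := fun v => f (fun j => v (σ j)) with hf'def
  set g' : (Fin m → Fin t) → B := fun v => g (fun j => v (σ j)) with hg'def
  have hf' : f' ∈ C m := hC.2 n m σ f hf
  have hg' : g' ∈ C m := hC.2 n m σ g hg
  have hmem : (f' av, g' av) ∈ PhiX C av := by
    refine ⟨f', hf', g', hg', ?_, rfl⟩
    intro c hc
    exact hagree _ (claim c hc)
  have := ha hmem
  have hfav : f' av = f bv := by
    simp only [hf'def]
    congr 1
    exact funext hσ
  have hgav : g' av = g bv := by
    simp only [hg'def]
    congr 1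
    exact funext hσ
  rw [hfav, hgav] at this
  exact this
end
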